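/- For every integer n ≥ 1, integers k₂ ≥ 1 and 1 ≤ i ≤ n, and every 1 ≤ a ≤ n, one has L'^{(k₂)}_{i,i}(Q_a(W,Z)) = (k₂ + 1 − a)·Q_{a−1}^{[i;i]}(W,Z); moreover L'^{(k₂)}_{i,i}(Q₀(W,Z)) = 0. -/

import Mathlib

noncomputable section

/-- Variables for polynomials in the entries of two `N × N` matrices `W` (`Sum.inl`) and
`Z` (`Sum.inr`). -/
abbrev WZVars (N : ℕ) := (Fin N × Fin N) ⊕ (Fin N × Fin N)

/-- The polynomial `Q_a(W,Z)` defined by `det(W + λ Z) = Σ_a Q_a(W,Z) λ^a`. -/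
def Qpoly (N a : ℕ) : MvPolynomial (WZVars N) ℂ :=
  Polynomial.coeff
    (Matrix.det (Matrix.of fun s t : Fin N =>
      Polynomial.C (MvPolynomial.X (Sum.inl (s, t))) +
        Polynomial.X * Polynomial.C (MvPolynomial.X (Sum.inr (s, t))))) a

/-- The polynomial `Q_a^{[i;i]}(W,Z)`: the coefficient of `λ^a` in the determinant of the
matrix obtained from `W + λ Z` (of size `n+1`) by deleting row `i` and column `i`. -/
def QpolyMinor (n : ℕ) (i : Fin (n + 1)) (a : ℕ) : MvPolynomial (WZVars (n + 1)) ℂ :=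
  Polynomial.coeff
    (Matrix.det (Matrix.of fun s t : Fin n =>
      Polynomial.C (MvPolynomial.X (Sum.inl (i.succAbove s, i.succAbove t))) +
        Polynomial.X *
          Polynomial.C (MvPolynomial.X (Sum.inr (i.succAbove s, i.succAbove t))))) a

/-- The differential operator
`L'^{(k₂)}_{i,j} = k₂·∂/∂z_{i,j} + Σ_{s,t} z_{s,t}·∂²/(∂z_{s,j}∂z_{i,t})`. -/
def Lop' (N : ℕ) (k₂ : ℕ) (i j : Fin N) (Q : MvPolynomial (WZVars N) ℂ) :
    MvPolynomial (WZVars N) ℂ :=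
  (k₂ : ℂ) • MvPolynomial.pderiv (Sum.inr (i, j)) Q +
    ∑ s : Fin N, ∑ t : Fin N,
      MvPolynomial.X (Sum.inr (s, t)) *
        MvPolynomial.pderiv (Sum.inr (s, j)) (MvPolynomial.pderiv (Sum.inr (i, t)) Q)

/-! ### Coefficientwise extension of `pderiv` to polynomials over `MvPolynomial` -/

open Polynomial MvPolynomial Matrix Finset

section pext

variable {σ : Type*}

private def pextFun (v : σ) (p : Polynomial (MvPolynomial σ ℂ)) :
    Polynomial (MvPolynomial σ ℂ) :=
  ⟨⟨Finsupp.mapRange (⇑(MvPolynomial.pderiv v)) (map_zero _) p.toFinsupp.coeff⟩⟩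

private lemma pextFun_coeff (v : σ) (p : Polynomial (MvPolynomial σ ℂ)) (n : ℕ) :
    (pextFun v p).coeff n = MvPolynomial.pderiv v (p.coeff n) := rfl

/-- Coefficientwise extension of `pderiv v` to `(MvPolynomial σ ℂ)[X]`, as a derivation. -/
def pext (v : σ) :
    Derivation ℂ (Polynomial (MvPolynomial σ ℂ)) (Polynomial (MvPolynomial σ ℂ)) where
  toFun := pextFun v
  map_add' p q := by
    apply Polynomial.ext; intro n
    simp [pextFun_coeff]
  map_smul' c p := by
    apply Polynomial.ext; intro n
    simp [pextFun_coeff]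
  map_one_eq_zero' := by
    apply Polynomial.ext; intro n
    show (pextFun v 1).coeff n = Polynomial.coeff 0 n
    rw [pextFun_coeff]
    simp only [Polynomial.coeff_one, Polynomial.coeff_zero]
    split_ifs <;> simp
  leibniz' p q := by
    apply Polynomial.ext; intro n
    show (pextFun v (p * q)).coeff n = (p * pextFun v q + q * pextFun v p).coeff n
    rw [pextFun_coeff, Polynomial.coeff_add, Polynomial.coeff_mul, Polynomial.coeff_mul,
      Polynomial.coeff_mul, map_sum]
    simp only [pextFun_coeff, MvPolynomial.pderiv_mul]
    rw [Finset.sum_add_distrib, add_comm]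
    congr 1
    rw [← Finset.Nat.sum_antidiagonal_swap (f := fun x => q.coeff x.1 * (pderiv v) (p.coeff x.2))]
    simp [mul_comm]

lemma pext_coeff (v : σ) (p : Polynomial (MvPolynomial σ ℂ)) (n : ℕ) :
    (pext v p).coeff n = MvPolynomial.pderiv v (p.coeff n) := rfl

lemma pext_C (v : σ) (r : MvPolynomial σ ℂ) :
    pext v (Polynomial.C r) = Polynomial.C (MvPolynomial.pderiv v r) := by
  apply Polynomial.ext; intro n
  rw [pext_coeff]
  simp only [Polynomial.coeff_C]
  split_ifs <;> simp

lemma pext_X (v : σ) : pext v (Polynomial.X : Polynomial (MvPolynomial σ ℂ)) = 0 := by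
  apply Polynomial.ext; intro n
  rw [pext_coeff]
  simp only [Polynomial.coeff_X, Polynomial.coeff_zero]
  split_ifs <;> simp

lemma pext_X_mul (v : σ) (p : Polynomial (MvPolynomial σ ℂ)) :
    pext v (Polynomial.X * p) = Polynomial.X * pext v p := by
  rw [Derivation.leibniz, pext_X]
  simp [smul_eq_mul, mul_comm]

end pext

/-! ### Derivations applied to determinants -/

section derdet

variable {R S : Type*} [CommSemiring R] [CommRing S] [Algebra R S]

lemma Derivation.map_finset_prod {ι : Type*} [DecidableEq ι] (d : Derivation R S S)
    (s : Finset ι) (f : ι → S) :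
    d (∏ i ∈ s, f i) = ∑ i ∈ s, d (f i) * ∏ j ∈ s.erase i, f j := by
  classical
  refine Finset.induction_on s (by simp) ?_
  intro a s ha ih
  rw [Finset.prod_insert ha, Derivation.leibniz, smul_eq_mul, smul_eq_mul, ih,
    Finset.sum_insert ha, Finset.erase_insert ha, Finset.mul_sum, add_comm]
  congr 1
  · ring
  refine Finset.sum_congr rfl fun i hi => ?_
  rw [Finset.erase_insert_of_ne (fun h : a = i => ha (h ▸ hi)), Finset.prod_insert
    (fun h => ha (Finset.mem_of_mem_erase h))]
  ring

lemma Derivation.map_det' {N : ℕ} (d : Derivation R S S) (B : Matrix (Fin N) (Fin N) S) :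
    d B.det = ∑ s, (B.updateRow s fun t => d (B s t)).det := by
  simp only [Matrix.det_apply]
  rw [map_sum, Finset.sum_comm]
  refine Finset.sum_congr rfl fun σ _ => ?_
  rw [Units.smul_def, map_zsmul, Derivation.map_finset_prod, Finset.smul_sum]
  refine Fintype.sum_equiv σ _ _ fun i => ?_
  rw [Units.smul_def]
  congr 1
  rw [← Finset.mul_prod_erase Finset.univ _ (Finset.mem_univ i)]
  congr 1
  · rw [Matrix.updateRow_self]
  · refine Finset.prod_congr rfl fun j hj => ?_
    rw [Matrix.updateRow_ne]
    exact fun h => (Finset.mem_erase.mp hj).1 (σ.injective h)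

end derdet

/-! ### The matrix `W + λ Z` and derivatives of its determinant -/

section mmat

variable {N : ℕ}

/-- The matrix `W + λ Z` over `(MvPolynomial (WZVars N) ℂ)[X]`. -/
def Mmat (N : ℕ) : Matrix (Fin N) (Fin N) (Polynomial (MvPolynomial (WZVars N) ℂ)) :=
  Matrix.of fun s t => Polynomial.C (MvPolynomial.X (Sum.inl (s, t))) +
    Polynomial.X * Polynomial.C (MvPolynomial.X (Sum.inr (s, t)))

/-- Row `s` of the matrix `Z`. -/
def Zrow (N : ℕ) (s : Fin N) : Fin N → Polynomial (MvPolynomial (WZVars N) ℂ) :=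
  fun t => Polynomial.C (MvPolynomial.X (Sum.inr (s, t)))

lemma pext_Mmat (p q s t : Fin N) :
    pext (Sum.inr (p, q)) (Mmat N s t) =
      if s = p ∧ t = q then Polynomial.X else 0 := by
  rw [Mmat, Matrix.of_apply, map_add, pext_C, pext_X_mul, pext_C]
  rw [MvPolynomial.pderiv_X_of_ne (by simp)]
  by_cases h : s = p ∧ t = q
  · obtain ⟨rfl, rfl⟩ := h
    rw [MvPolynomial.pderiv_X_self]
    simp
  · rw [MvPolynomial.pderiv_X_of_ne
      (by simpa [Prod.ext_iff, and_comm] using fun hp hq => h ⟨hp, hq⟩)]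
    simp [h]

lemma pext_single_row (v : WZVars N) (t q : Fin N) :
    pext v ((Pi.single t 1 : Fin N → Polynomial (MvPolynomial (WZVars N) ℂ)) q) = 0 := by
  rcases eq_or_ne q t with rfl | h
  · rw [Pi.single_eq_same]; exact (pext v).map_one_eq_zero
  · rw [Pi.single_eq_of_ne h]; exact map_zero _

lemma updateRow_updateRow_comm {S : Type*} {i s : Fin N} (A : Matrix (Fin N) (Fin N) S)
    (h : i ≠ s) (r r' : Fin N → S) :
    (A.updateRow i r).updateRow s r' = (A.updateRow s r').updateRow i r := by
  ext p q
  rcases eq_or_ne p s with rfl | hps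
  · rw [Matrix.updateRow_self, Matrix.updateRow_ne (Ne.symm h), Matrix.updateRow_self]
  · rw [Matrix.updateRow_ne hps]
    rcases eq_or_ne p i with rfl | hpi
    · rw [Matrix.updateRow_self, Matrix.updateRow_self]
    · rw [Matrix.updateRow_ne hpi, Matrix.updateRow_ne hpi, Matrix.updateRow_ne hps]

lemma det_updateRow_finset_sum {S : Type*} [CommRing S] {ι : Type*}
    (A : Matrix (Fin N) (Fin N) S) (j : Fin N) (s : Finset ι) (v : ι → Fin N → S) :
    (A.updateRow j (∑ k ∈ s, v k)).det = ∑ k ∈ s, (A.updateRow j (v k)).det := by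
  classical
  refine Finset.induction_on s ?_ ?_
  · simp only [Finset.sum_empty]
    refine Matrix.det_eq_zero_of_row_eq_zero j fun t => ?_
    simp
  · intro a s ha ih
    rw [Finset.sum_insert ha, Matrix.det_updateRow_add, ih, Finset.sum_insert ha]

lemma pext_det_Mmat (p q : Fin N) :
    pext (Sum.inr (p, q)) (Mmat N).det = Polynomial.X * (Mmat N).adjugate q p := by
  rw [Derivation.map_det' (pext (Sum.inr (p, q))) (Mmat N)]
  rw [Finset.sum_eq_single p]
  · have : (fun t => pext (Sum.inr (p, q)) (Mmat N p t)) =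
        (Polynomial.X : Polynomial (MvPolynomial (WZVars N) ℂ)) •
          (Pi.single q 1 : Fin N → Polynomial (MvPolynomial (WZVars N) ℂ)) := by
      funext u
      rw [pext_Mmat]
      simp [Pi.single_apply, mul_ite]
    rw [this, Matrix.det_updateRow_smul, Matrix.adjugate_apply]
  · intro s _ hs
    refine Matrix.det_eq_zero_of_row_eq_zero s fun t => ?_
    rw [Matrix.updateRow_self, pext_Mmat, if_neg (by tauto)]
  · simp

lemma pext_det_updateRow (i t s q : Fin N) (hs : s ≠ i) :
    pext (Sum.inr (s, q)) ((Mmat N).updateRow i (Pi.single t 1)).det =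
      Polynomial.X *
        (((Mmat N).updateRow i (Pi.single t 1)).updateRow s (Pi.single q 1)).det := by
  rw [Derivation.map_det']
  rw [Finset.sum_eq_single s]
  · have : (fun u => pext (Sum.inr (s, q)) (((Mmat N).updateRow i (Pi.single t 1)) s u)) =
        (Polynomial.X : Polynomial (MvPolynomial (WZVars N) ℂ)) •
          (Pi.single q 1 : Fin N → Polynomial (MvPolynomial (WZVars N) ℂ)) := by
      funext u
      rw [Matrix.updateRow_ne hs, pext_Mmat]
      simp [Pi.single_apply, mul_ite]
    rw [this, Matrix.det_updateRow_smul]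
  · intro p _ hp
    refine Matrix.det_eq_zero_of_row_eq_zero p fun u => ?_
    rw [Matrix.updateRow_self]
    rcases eq_or_ne p i with rfl | hpi
    · rw [Matrix.updateRow_self]; exact pext_single_row _ _ _
    · rw [Matrix.updateRow_ne hpi, pext_Mmat, if_neg (by tauto)]
  · simp

lemma pext_det_updateRow_self (i t q : Fin N) :
    pext (Sum.inr (i, q)) ((Mmat N).updateRow i (Pi.single t 1)).det = 0 := by
  rw [Derivation.map_det']
  refine Finset.sum_eq_zero fun p _ => ?_
  refine Matrix.det_eq_zero_of_row_eq_zero p fun u => ?_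
  rw [Matrix.updateRow_self]
  rcases eq_or_ne p i with rfl | hpi
  · rw [Matrix.updateRow_self]; exact pext_single_row _ _ _
  · rw [Matrix.updateRow_ne hpi, pext_Mmat, if_neg (by tauto)]

lemma derivative_det_updateRow (i : Fin N) :
    Polynomial.derivative ((Mmat N).updateRow i (Pi.single i 1)).det =
      ∑ s, if s = i then 0 else
        (((Mmat N).updateRow i (Pi.single i 1)).updateRow s (Zrow N s)).det := by
  have h := Derivation.map_det' (Polynomial.derivative' (R := MvPolynomial (WZVars N) ℂ))
    ((Mmat N).updateRow i (Pi.single i 1))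
  simp only [Polynomial.derivative'_apply] at h
  rw [h]
  refine Finset.sum_congr rfl fun s _ => ?_
  rcases eq_or_ne s i with rfl | hsi
  · rw [if_pos rfl]
    refine Matrix.det_eq_zero_of_row_eq_zero s fun u => ?_
    rw [Matrix.updateRow_self, Matrix.updateRow_self]
    rcases eq_or_ne u s with rfl | h
    · rw [Pi.single_eq_same]; simp
    · rw [Pi.single_eq_of_ne h]; simp
  · rw [if_neg hsi]
    have : (fun t => Polynomial.derivative ((Mmat N).updateRow i (Pi.single i 1) s t)) =
        Zrow N s := by
      funext u
      rw [Matrix.updateRow_ne hsi]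
      rw [Mmat, Matrix.of_apply]
      simp [Zrow]
    rw [this]

lemma det_swap (i s : Fin N) (h : s ≠ i)
    (u w : Fin N → Polynomial (MvPolynomial (WZVars N) ℂ)) :
    (((Mmat N).updateRow s u).updateRow i w).det =
      - (((Mmat N).updateRow i u).updateRow s w).det := by
  have heq : ((Mmat N).updateRow s u).updateRow i w =
      (((Mmat N).updateRow i u).updateRow s w).submatrix (Equiv.swap i s) id := by
    ext p q
    rw [Matrix.submatrix_apply, id_eq]
    rcases eq_or_ne p i with rfl | hpi
    · rw [Matrix.updateRow_self, Equiv.swap_apply_left, Matrix.updateRow_self]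
    · rw [Matrix.updateRow_ne hpi]
      rcases eq_or_ne p s with rfl | hps
      · rw [Matrix.updateRow_self, Equiv.swap_apply_right, Matrix.updateRow_ne (Ne.symm h),
          Matrix.updateRow_self]
      · rw [Matrix.updateRow_ne hps, Equiv.swap_apply_of_ne_of_ne hpi hps,
          Matrix.updateRow_ne hps, Matrix.updateRow_ne hpi]
  rw [heq, Matrix.det_permute, Equiv.Perm.sign_swap (Ne.symm h)]
  push_cast
  ring

lemma zrow_eq_sum (s : Fin N) :
    Zrow N s = ∑ t, (Zrow N s t) •
      (Pi.single t 1 : Fin N → Polynomial (MvPolynomial (WZVars N) ℂ)) := by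
  funext q
  rw [Finset.sum_apply]
  simp only [Pi.smul_apply, Pi.single_apply, smul_eq_mul, mul_ite, mul_one, mul_zero]
  rw [Finset.sum_ite_eq Finset.univ q (fun t => Zrow N s t)]
  simp

/-- The master identity, at the level of polynomials in `λ`. -/
lemma master (i : Fin N) (k₂ : ℕ) :
    (k₂ : ℂ) • pext (Sum.inr (i, i)) (Mmat N).det +
      (∑ s, ∑ t, Polynomial.C (MvPolynomial.X (Sum.inr (s, t))) *
        pext (Sum.inr (s, i)) (pext (Sum.inr (i, t)) (Mmat N).det)) =
      (k₂ : ℂ) • (Polynomial.X * ((Mmat N).updateRow i (Pi.single i 1)).det) -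
        Polynomial.X ^ 2 *
          Polynomial.derivative ((Mmat N).updateRow i (Pi.single i 1)).det := by
  have h1 : pext (Sum.inr (i, i)) (Mmat N).det =
      Polynomial.X * ((Mmat N).updateRow i (Pi.single i 1)).det := by
    rw [pext_det_Mmat, Matrix.adjugate_apply]
  have h2 : ∀ s t : Fin N, pext (Sum.inr (s, i)) (pext (Sum.inr (i, t)) (Mmat N).det) =
      Polynomial.X * pext (Sum.inr (s, i)) ((Mmat N).updateRow i (Pi.single t 1)).det := by
    intro s t
    rw [pext_det_Mmat, Matrix.adjugate_apply, pext_X_mul]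
  have h3 : ∀ s : Fin N, (∑ t, Polynomial.C (MvPolynomial.X (Sum.inr (s, t))) *
        pext (Sum.inr (s, i)) (pext (Sum.inr (i, t)) (Mmat N).det)) =
      if s = i then 0 else
        -(Polynomial.X ^ 2 *
          (((Mmat N).updateRow i (Pi.single i 1)).updateRow s (Zrow N s)).det) := by
    intro s
    rcases eq_or_ne s i with rfl | hsi
    · rw [if_pos rfl]
      refine Finset.sum_eq_zero fun t _ => ?_
      rw [h2, pext_det_updateRow_self]
      simp
    · rw [if_neg hsi]
      have key : ∀ t, pext (Sum.inr (s, i)) ((Mmat N).updateRow i (Pi.single t 1)).det =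
          Polynomial.X *
            (((Mmat N).updateRow s (Pi.single i 1)).updateRow i (Pi.single t 1)).det := by
        intro t
        rw [pext_det_updateRow i t s i hsi, updateRow_updateRow_comm _ (Ne.symm hsi)]
      calc (∑ t, Polynomial.C (MvPolynomial.X (Sum.inr (s, t))) *
            pext (Sum.inr (s, i)) (pext (Sum.inr (i, t)) (Mmat N).det))
          = Polynomial.X ^ 2 * ∑ t, (Zrow N s t) •
              (((Mmat N).updateRow s (Pi.single i 1)).updateRow i (Pi.single t 1)).det := by
            rw [Finset.mul_sum]
            refine Finset.sum_congr rfl fun t _ => ?_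
            rw [h2, key, smul_eq_mul]
            simp only [Zrow]
            ring
        _ = Polynomial.X ^ 2 *
              (((Mmat N).updateRow s (Pi.single i 1)).updateRow i (Zrow N s)).det := by
            congr 1
            have hsum : (((Mmat N).updateRow s (Pi.single i 1)).updateRow i (Zrow N s)).det =
                ∑ t, (Zrow N s t) •
                  (((Mmat N).updateRow s (Pi.single i 1)).updateRow i (Pi.single t 1)).det := by
              conv_lhs => rw [zrow_eq_sum s]
              rw [det_updateRow_finset_sum]
              refine Finset.sum_congr rfl fun t _ => ?_
              rw [Matrix.det_updateRow_smul, smul_eq_mul]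
            rw [hsum]
        _ = -(Polynomial.X ^ 2 *
              (((Mmat N).updateRow i (Pi.single i 1)).updateRow s (Zrow N s)).det) := by
            rw [det_swap i s hsi (Pi.single i 1) (Zrow N s)]
            ring
  rw [h1, Finset.sum_congr rfl fun s _ => h3 s, sub_eq_add_neg]
  congr 1
  rw [derivative_det_updateRow i, Finset.mul_sum, ← Finset.sum_neg_distrib]
  refine Finset.sum_congr rfl fun s _ => ?_
  split_ifs with h
  · simp
  · rfl

end mmat

/-! ### Transfer to the statement -/

lemma lop_coeff {N : ℕ} (i : Fin N) (k₂ a : ℕ) :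
    Lop' N k₂ i i (Qpoly N a) =
      ((k₂ : ℂ) • pext (Sum.inr (i, i)) (Mmat N).det +
        ∑ s, ∑ t, Polynomial.C (MvPolynomial.X (Sum.inr (s, t))) *
          pext (Sum.inr (s, i)) (pext (Sum.inr (i, t)) (Mmat N).det)).coeff a := by
  rw [Polynomial.coeff_add, Polynomial.coeff_smul, Polynomial.finset_sum_coeff]
  simp only [Lop']
  congr 1
  refine Finset.sum_congr rfl fun s _ => ?_
  rw [Polynomial.finset_sum_coeff]
  refine Finset.sum_congr rfl fun t _ => ?_
  rw [Polynomial.coeff_C_mul, pext_coeff, pext_coeff]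
  rfl

lemma Qminor_eq (n : ℕ) (i : Fin (n + 1)) (b : ℕ) :
    QpolyMinor n i b = (((Mmat (n + 1)).updateRow i (Pi.single i 1)).det).coeff b := by
  have h : ((Mmat (n + 1)).updateRow i (Pi.single i 1)).det =
      ((Mmat (n + 1)).submatrix i.succAbove i.succAbove).det := by
    rw [← Matrix.adjugate_apply, Matrix.adjugate_fin_succ_eq_det_submatrix]
    have heven : ((-1 : Polynomial (MvPolynomial (WZVars (n + 1)) ℂ)) ^ ((i : ℕ) + (i : ℕ))) = 1 := by
      rw [show (i : ℕ) + (i : ℕ) = 2 * (i : ℕ) by ring, pow_mul]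
      norm_num
    rw [heven, one_mul]
  rw [h]
  rfl

/-- For matrices of size `n + 1 ≥ 1`, every `k₂ ≥ 1` and `1 ≤ i ≤ n + 1`:
`L'^{(k₂)}_{i,i}(Q_a) = (k₂ + 1 − a)·Q_{a−1}^{[i;i]}` for `1 ≤ a ≤ n + 1`, and moreover
`L'^{(k₂)}_{i,i}(Q₀) = 0`. -/
theorem stmt12 (n k₂ : ℕ) (hk₂ : 1 ≤ k₂) (i : Fin (n + 1)) :
    (∀ a : ℕ, 1 ≤ a → a ≤ n + 1 →
      Lop' (n + 1) k₂ i i (Qpoly (n + 1) a) =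
        ((k₂ : ℂ) + 1 - (a : ℂ)) • QpolyMinor n i (a - 1)) ∧
    Lop' (n + 1) k₂ i i (Qpoly (n + 1) 0) = 0 := by
  constructor
  · intro a ha _
    obtain ⟨b, rfl⟩ : ∃ b, a = b + 1 := ⟨a - 1, (Nat.succ_pred_eq_of_pos ha).symm⟩
    rw [lop_coeff, master, Qminor_eq, Nat.add_sub_cancel]
    set G := ((Mmat (n + 1)).updateRow i (Pi.single i 1)).det with hG
    rw [Polynomial.coeff_sub, Polynomial.coeff_smul, Polynomial.coeff_X_mul]
    have hx2 : (Polynomial.X ^ 2 * Polynomial.derivative G).coeff (b + 1) =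
        (b : MvPolynomial (WZVars (n + 1)) ℂ) * G.coeff b := by
      cases b with
      | zero =>
        rw [pow_two, mul_assoc, Polynomial.coeff_X_mul, Polynomial.mul_coeff_zero]
        simp
      | succ c =>
        rw [pow_two, mul_assoc, Polynomial.coeff_X_mul, Polynomial.coeff_X_mul,
          Polynomial.coeff_derivative]
        push_cast
        ring
    rw [hx2]
    have hcast : ((b : ℂ)) • G.coeff b =
        (b : MvPolynomial (WZVars (n + 1)) ℂ) * G.coeff b := by
      rw [MvPolynomial.smul_eq_C_mul, map_natCast]
    push_cast
    rw [show ((k₂ : ℂ) + 1 - ((b : ℂ) + 1)) = ((k₂ : ℂ) - (b : ℂ)) by ring, sub_smul, hcast]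
  · rw [lop_coeff, master, Polynomial.coeff_sub, Polynomial.coeff_smul,
      Polynomial.mul_coeff_zero, Polynomial.mul_coeff_zero]
    simp

end
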